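/- For all integers p, q ≥ 1, the number of (p,q) Delannoy paths L with ω(L) = 1 (equivalently, the constant term D_{p,q}(0) of the polynomial D_{p,q}(t) := Σ_{L ∈ 𝒟(p,q)} t^{ω(L)−1}) equals C(p+q, q) + C(p+q−2, q−1). -/

import Mathlib

/-- A step of a lattice path: east `(1,0)`, north `(0,1)`, or diagonal `(1,1)`. -/
inductive DStep : Type
  | E | N | D
deriving DecidableEq

/-- The displacement vector of a step. -/
def stepVec : DStep → ℕ × ℕ
  | .E => (1, 0)
  | .N => (0, 1)
  | .D => (1, 1)

/-- A `(p,q)` Delannoy path: a sequence of steps `E`, `N`, `D` whose total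
displacement from `(0,0)` is `(p,q)`. -/
def IsDelannoy (p q : ℕ) (l : List DStep) : Prop :=
  (l.map stepVec).sum = (p, q)

/-- `D(p,q)`, the number of `(p,q)` Delannoy paths. -/
noncomputable def delannoyNum (p q : ℕ) : ℕ :=
  Nat.card {l : List DStep // IsDelannoy p q l}

/-- The weight of the part of a Delannoy path starting at the given lattice
point: a diagonal step starting at `(a,b)` contributes a factor `a+b+1`,
other steps contribute `1`. -/
def weightFrom : ℕ × ℕ → List DStep → ℕ
  | _, [] => 1
  | ab, s :: t => (if s = DStep.D then ab.1 + ab.2 + 1 else 1) * weightFrom (ab + stepVec s) t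

/-- The weight `ω(L)` of a Delannoy path `L` (starting at the origin): the
product over all diagonal steps going from a point `(a,b)` to `(a+1,b+1)`
of the numbers `a+b+1`. -/
def weight (l : List DStep) : ℕ := weightFrom (0, 0) l

/-- The weight generating polynomial `D_{p,q}(t) = ∑_{L ∈ 𝒟(p,q)} t^{ω(L)-1}`. -/
noncomputable def Dpoly (p q : ℕ) : Polynomial ℕ :=
  ∑ᶠ L : {l : List DStep // IsDelannoy p q l}, (Polynomial.X : Polynomial ℕ) ^ (weight L.1 - 1)

instance : Fintype DStep :=
  ⟨{.E, .N, .D}, by intro x; cases x <;> simp⟩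

lemma count_length (l : List DStep) :
    l.count .E + l.count .N + l.count .D = l.length := by
  induction l with
  | nil => simp
  | cons s t ih => cases s <;> simp [List.count_cons] <;> omega

lemma sum_map_stepVec (l : List DStep) :
    (l.map stepVec).sum = (l.count .E + l.count .D, l.count .N + l.count .D) := by
  induction l with
  | nil => simp; rfl
  | cons s t ih =>
      cases s <;> simp [List.count_cons, ih, stepVec, Prod.ext_iff] <;> omega

lemma isDelannoy_iff {p q : ℕ} {l : List DStep} :
    IsDelannoy p q l ↔ l.count .E + l.count .D = p ∧ l.count .N + l.count .D = q := by
  rw [IsDelannoy, sum_map_stepVec, Prod.ext_iff]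

lemma weightFrom_pos (ab : ℕ × ℕ) (l : List DStep) : 0 < weightFrom ab l := by
  induction l generalizing ab with
  | nil => simp [weightFrom]
  | cons s t ih =>
      rw [weightFrom]
      exact Nat.mul_pos (by split <;> omega) (ih _)

lemma weightFrom_eq_one {ab : ℕ × ℕ} (h : 0 < ab.1 + ab.2) (l : List DStep) :
    weightFrom ab l = 1 ↔ l.count .D = 0 := by
  induction l generalizing ab with
  | nil => simp [weightFrom]
  | cons s t ih =>
      rw [weightFrom]
      cases s with
      | D =>
          constructor
          · intro hw
            rw [if_pos rfl] at hw
            have := weightFrom_pos (ab + stepVec .D) t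
            nlinarith
          · intro hc; simp [List.count_cons] at hc
      | E =>
          have : 0 < (ab + stepVec DStep.E).1 + (ab + stepVec DStep.E).2 := by
            simp [stepVec, Prod.fst_add, Prod.snd_add]
          simp [List.count_cons, ih this]
      | N =>
          have : 0 < (ab + stepVec DStep.N).1 + (ab + stepVec DStep.N).2 := by
            simp [stepVec, Prod.fst_add, Prod.snd_add]
          simp [List.count_cons, ih this]

lemma weight_eq_one (l : List DStep) :
    weight l = 1 ↔ (l.count .D = 0 ∨ ∃ t, l = .D :: t ∧ t.count .D = 0) := by
  cases l with
  | nil => simp [weight, weightFrom]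
  | cons s t =>
      rw [weight, weightFrom]
      cases s with
      | D =>
          have h : ((0, 0) : ℕ × ℕ).1 + ((0, 0) : ℕ × ℕ).2 + 1 = 1 := rfl
          have h3 : ((0, 0) : ℕ × ℕ) + stepVec DStep.D = (1, 1) := rfl
          rw [if_pos rfl, h, one_mul, h3, weightFrom_eq_one (by norm_num)]
          simp [List.count_cons]
      | E =>
          have h3 : ((0, 0) : ℕ × ℕ) + stepVec DStep.E = (1, 0) := rfl
          rw [if_neg (by simp), one_mul, h3, weightFrom_eq_one (by norm_num)]
          simp [List.count_cons]
      | N =>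
          have h3 : ((0, 0) : ℕ × ℕ) + stepVec DStep.N = (0, 1) := rfl
          rw [if_neg (by simp), one_mul, h3, weightFrom_eq_one (by norm_num)]
          simp [List.count_cons]

/-- Set of E/N paths with `p` east and `q` north steps. -/
def ENset (p q : ℕ) : Set (List DStep) :=
  {l | l.count .E = p ∧ l.count .N = q ∧ l.count .D = 0}

lemma ENset_finite (p q : ℕ) : (ENset p q).Finite := by
  apply (List.finite_length_le DStep (p + q)).subset
  rintro l ⟨h1, h2, h3⟩
  have := count_length l
  simp only [Set.mem_setOf_eq]
  omega

lemma ENset_ncard_aux : ∀ n p q, p + q = n → (ENset p q).ncard = (p + q).choose q := by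
  intro n
  induction n using Nat.strong_induction_on with
  | _ n ih =>
  intro p q hn
  rcases Nat.eq_zero_or_pos p with hp | hp
  · subst hp
    have : ENset 0 q = {List.replicate q .N} := by
      ext l
      simp only [ENset, Set.mem_setOf_eq, Set.mem_singleton_iff]
      constructor
      · rintro ⟨h1, h2, h3⟩
        have hlen := count_length l
        rw [List.eq_replicate_iff]
        constructor
        · omega
        · intro b hb
          cases b with
          | N => rfl
          | E => exact absurd (List.count_pos_iff.mpr hb) (by omega)
          | D => exact absurd (List.count_pos_iff.mpr hb) (by omega)
      · rintro rfl
        refine ⟨?_, ?_, ?_⟩ <;> simp [List.count_replicate]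
    rw [this, Set.ncard_singleton, Nat.zero_add, Nat.choose_self]
  rcases Nat.eq_zero_or_pos q with hq | hq
  · subst hq
    have : ENset p 0 = {List.replicate p .E} := by
      ext l
      simp only [ENset, Set.mem_setOf_eq, Set.mem_singleton_iff]
      constructor
      · rintro ⟨h1, h2, h3⟩
        have hlen := count_length l
        rw [List.eq_replicate_iff]
        constructor
        · omega
        · intro b hb
          cases b with
          | E => rfl
          | N => exact absurd (List.count_pos_iff.mpr hb) (by omega)
          | D => exact absurd (List.count_pos_iff.mpr hb) (by omega)
      · rintro rfl
        refine ⟨?_, ?_, ?_⟩ <;> simp [List.count_replicate]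
    rw [this, Set.ncard_singleton, Nat.choose_zero_right]
  · -- p, q ≥ 1
    obtain ⟨a, rfl⟩ : ∃ a, p = a + 1 := ⟨p - 1, by omega⟩
    obtain ⟨b, rfl⟩ : ∃ b, q = b + 1 := ⟨q - 1, by omega⟩
    have hdecomp : ENset (a + 1) (b + 1) =
        (List.cons .E) '' ENset a (b + 1) ∪ (List.cons .N) '' ENset (a + 1) b := by
      ext l
      constructor
      · rintro ⟨h1, h2, h3⟩
        cases l with
        | nil => simp at h1
        | cons s t =>
            cases s with
            | E =>
                left
                refine ⟨t, ⟨?_, ?_, ?_⟩, rfl⟩ <;>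
                  simp [List.count_cons] at h1 h2 h3 ⊢ <;> omega
            | N =>
                right
                refine ⟨t, ⟨?_, ?_, ?_⟩, rfl⟩ <;>
                  simp [List.count_cons] at h1 h2 h3 ⊢ <;> omega
            | D => simp [List.count_cons] at h3
      · rintro (⟨t, ⟨h1, h2, h3⟩, rfl⟩ | ⟨t, ⟨h1, h2, h3⟩, rfl⟩) <;>
          refine ⟨?_, ?_, ?_⟩ <;> simp [List.count_cons, h1, h2, h3]
    have hinjE : Function.Injective (List.cons (DStep.E)) := fun x y h => by
      injection h
    have hinjN : Function.Injective (List.cons (DStep.N)) := fun x y h => by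
      injection h
    have hdisj : Disjoint ((List.cons .E) '' ENset a (b + 1))
        ((List.cons .N) '' ENset (a + 1) b) := by
      rw [Set.disjoint_left]
      rintro l ⟨t, _, rfl⟩ ⟨t', _, h⟩
      exact absurd (List.head_eq_of_cons_eq h.symm) (by simp)
    rw [hdecomp, Set.ncard_union_eq hdisj ((ENset_finite _ _).image _)
        ((ENset_finite _ _).image _),
      Set.ncard_image_of_injective _ hinjE, Set.ncard_image_of_injective _ hinjN]
    rw [ih (a + (b + 1)) (by omega) _ _ rfl, ih (a + 1 + b) (by omega) _ _ rfl]
    simp only [show a + (b + 1) = a + b + 1 from by omega,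
      show a + 1 + b = a + b + 1 from by omega,
      show a + 1 + (b + 1) = (a + b + 1) + 1 from by omega]
    rw [Nat.choose_succ_succ]
    exact Nat.add_comm _ _

lemma ENset_ncard (p q : ℕ) : (ENset p q).ncard = (p + q).choose q :=
  ENset_ncard_aux (p + q) p q rfl

lemma weight1_set_eq {p q : ℕ} (hp : 1 ≤ p) (hq : 1 ≤ q) :
    {l : List DStep | IsDelannoy p q l ∧ weight l = 1} =
      ENset p q ∪ (List.cons .D) '' ENset (p - 1) (q - 1) := by
  ext l
  simp only [Set.mem_setOf_eq, isDelannoy_iff, weight_eq_one, Set.mem_union]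
  constructor
  · rintro ⟨⟨h1, h2⟩, (h3 | ⟨t, rfl, h3⟩)⟩
    · exact Or.inl ⟨by omega, by omega, h3⟩
    · right
      refine ⟨t, ⟨?_, ?_, h3⟩, rfl⟩ <;>
        simp [List.count_cons, h3] at h1 h2 ⊢ <;> omega
  · rintro (⟨h1, h2, h3⟩ | ⟨t, ⟨h1, h2, h3⟩, rfl⟩)
    · exact ⟨⟨by omega, by omega⟩, Or.inl h3⟩
    · refine ⟨⟨?_, ?_⟩, Or.inr ⟨t, rfl, h3⟩⟩ <;>
        simp [List.count_cons, h1, h2, h3] <;> omega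

lemma weight1_count {p q : ℕ} (hp : 1 ≤ p) (hq : 1 ≤ q) :
    Nat.card {l : List DStep // IsDelannoy p q l ∧ weight l = 1} =
      (p + q).choose q + (p + q - 2).choose (q - 1) := by
  have : Nat.card {l : List DStep // IsDelannoy p q l ∧ weight l = 1} =
      ({l : List DStep | IsDelannoy p q l ∧ weight l = 1}).ncard :=
    Nat.card_coe_set_eq _
  rw [this, weight1_set_eq hp hq]
  have hinj : Function.Injective (List.cons (DStep.D)) := fun a b h => by injection h
  have hdisj : Disjoint (ENset p q) ((List.cons .D) '' ENset (p - 1) (q - 1)) := by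
    rw [Set.disjoint_left]
    rintro l ⟨h1, h2, h3⟩ ⟨t, _, rfl⟩
    simp [List.count_cons] at h3
  rw [Set.ncard_union_eq hdisj (ENset_finite _ _) ((ENset_finite _ _).image _),
    Set.ncard_image_of_injective _ hinj, ENset_ncard, ENset_ncard]
  congr 1
  congr 1
  omega

lemma delannoy_finite (p q : ℕ) : Finite {l : List DStep // IsDelannoy p q l} := by
  apply Set.Finite.to_subtype
  apply (List.finite_length_le DStep (p + q)).subset
  intro l hl
  have h2 : l.count .E + l.count .D = p ∧ l.count .N + l.count .D = q :=
    isDelannoy_iff.mp hl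
  have := count_length l
  simp only [Set.mem_setOf_eq]
  omega

theorem stmt17 (p q : ℕ) (hp : 1 ≤ p) (hq : 1 ≤ q) :
    Nat.card {l : List DStep // IsDelannoy p q l ∧ weight l = 1} =
        (p + q).choose q + (p + q - 2).choose (q - 1) ∧
      (Dpoly p q).coeff 0 = (p + q).choose q + (p + q - 2).choose (q - 1) := by
  refine ⟨weight1_count hp hq, ?_⟩
  have hfin := delannoy_finite p q
  letI : Fintype {l : List DStep // IsDelannoy p q l} := Fintype.ofFinite _
  rw [Dpoly, finsum_eq_sum_of_fintype, Polynomial.finset_sum_coeff]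
  have hstep : ∀ L : {l : List DStep // IsDelannoy p q l},
      ((Polynomial.X : Polynomial ℕ) ^ (weight L.1 - 1)).coeff 0 =
        if weight L.1 = 1 then 1 else 0 := by
    intro L
    rw [Polynomial.coeff_X_pow]
    have := weightFrom_pos (0, 0) L.1
    rw [weight] at *
    by_cases h : weightFrom (0,0) L.1 = 1
    · rw [if_pos h, if_pos (by omega)]
    · rw [if_neg h, if_neg (by omega)]
  rw [Finset.sum_congr rfl (fun L _ => hstep L), ← Finset.card_filter,
    ← Fintype.card_subtype, ← Nat.card_eq_fintype_card]
  exact (Nat.card_congr (Equiv.subtypeSubtypeEquivSubtypeInter (IsDelannoy p q)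
    (fun l => weight l = 1))).trans (weight1_count hp hq)
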